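/- The following identity of formal power series in ℚ[[q]] holds: 𝒳₄ = −4𝒳𝒳₃ − 3𝒳₂² − 6𝒳²𝒳₂ − 𝒳⁴ − (15/4)(𝒵₂𝒳² + 𝒵₂𝒳₂ + 𝒵₃𝒳) − (23/24)𝒵₄ + (29/9)𝒵₁²𝒵₂ − (65/72)𝒵₁𝒵₃ − (3/4)𝒵₂². (Second Yamaguchi–Yau identity among the basic generators.) -/

import Mathlib

noncomputable section

/-- The operator `q·d/dq` on formal power series in `q`. -/
def qd (f : PowerSeries ℚ) : PowerSeries ℚ :=
  PowerSeries.mk fun n => (n : ℚ) * PowerSeries.coeff n f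

/-- `I₀(q) = Σ_{d≥0} ((5d)!/(d!)⁵) q^d`. -/
def I0 : PowerSeries ℚ :=
  PowerSeries.mk fun d => (Nat.factorial (5 * d) : ℚ) / ((Nat.factorial d : ℚ)) ^ 5

/-- `I₁(q) = Σ_{d≥1} ((5d)!/(d!)⁵)(5 Σ_{j=d+1}^{5d} 1/j) q^d`. -/
def I1 : PowerSeries ℚ :=
  PowerSeries.mk fun d =>
    (Nat.factorial (5 * d) : ℚ) / ((Nat.factorial d : ℚ)) ^ 5 *
      (5 * ∑ j ∈ Finset.Icc (d + 1) (5 * d), (1 : ℚ) / j)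

/-- `I_{1,1} = 1 + q·d/dq (I₁/I₀)`. -/
def I11 : PowerSeries ℚ := 1 + qd (I1 * I0⁻¹)

/-- The operator `d/du = (1/L)·q·d/dq`. -/
def du (L f : PowerSeries ℚ) : PowerSeries ℚ := L⁻¹ * qd f

/-- The generators `𝒳_k`: `𝒳₁ = (d/du) log(I₀/L)` and `𝒳_{k+1} = (d/du) 𝒳_k`. -/
def Xg (L : PowerSeries ℚ) : ℕ → PowerSeries ℚ
  | 0 => 0
  | 1 => L⁻¹ * (qd I0 * I0⁻¹ - qd L * L⁻¹)
  | (k + 2) => du L (Xg L (k + 1))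

/-- The generators `𝒴_k`: `𝒴₁ = (d/du) log(I₀·I_{1,1}/L²)` and `𝒴_{k+1} = (d/du) 𝒴_k`. -/
def Yg (L : PowerSeries ℚ) : ℕ → PowerSeries ℚ
  | 0 => 0
  | 1 => L⁻¹ * (qd I0 * I0⁻¹ + qd I11 * I11⁻¹ - 2 * (qd L * L⁻¹))
  | (k + 2) => du L (Yg L (k + 1))

/-- The generators `𝒵_k`: `𝒵₁ = (d/du) log(q^{1/5}·L)` and `𝒵_{k+1} = (d/du) 𝒵_k`. -/
def Zg (L : PowerSeries ℚ) : ℕ → PowerSeries ℚ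
  | 0 => 0
  | 1 => L⁻¹ * (qd L * L⁻¹ + PowerSeries.C (1 / 5 : ℚ))
  | (k + 2) => du L (Zg L (k + 1))

-- ### Auxiliary lemmas about `qd`

theorem qd_add (f g : PowerSeries ℚ) : qd (f + g) = qd f + qd g := by
  ext n; simp [qd, mul_add]

theorem qd_mul (f g : PowerSeries ℚ) : qd (f * g) = qd f * g + f * qd g := by
  ext n
  simp only [qd, PowerSeries.coeff_mk, PowerSeries.coeff_mul, map_add, Finset.mul_sum,
    ← Finset.sum_add_distrib]
  apply Finset.sum_congr rfl
  intro p hp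
  have h := Finset.HasAntidiagonal.mem_antidiagonal.mp hp
  have h2 : (n : ℚ) = (p.1 : ℚ) + p.2 := by exact_mod_cast congrArg (Nat.cast (R := ℚ)) h.symm
  rw [h2]; ring

theorem qd_one : qd 1 = 0 := by
  ext n; simp [qd, PowerSeries.coeff_one]

theorem qd_C (a : ℚ) : qd (PowerSeries.C a) = 0 := by
  ext n; simp [qd, PowerSeries.coeff_C]; tauto

theorem qd_ofNat (n : ℕ) [n.AtLeastTwo] :
    qd (no_index (OfNat.ofNat n) : PowerSeries ℚ) = 0 :=
  qd_C _

theorem qd_X : qd PowerSeries.X = PowerSeries.X := by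
  ext n; simp [qd, PowerSeries.coeff_X]
  split <;> simp_all

theorem qd_neg (f : PowerSeries ℚ) : qd (-f) = -qd f := by
  ext n; simp [qd]

theorem qd_sub (f g : PowerSeries ℚ) : qd (f - g) = qd f - qd g := by
  ext n; simp [qd, mul_sub]

theorem qd_pow (f : PowerSeries ℚ) (n : ℕ) :
    qd (f ^ (n + 1)) = ((n : PowerSeries ℚ) + 1) * f ^ n * qd f := by
  induction n with
  | zero => simp [qd_mul, qd_one]
  | succ k ih => rw [pow_succ, qd_mul, ih]; push_cast; ring

theorem I0_const : PowerSeries.constantCoeff I0 = 1 := by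
  rw [← PowerSeries.coeff_zero_eq_constantCoeff]
  simp [I0, Nat.factorial]

theorem fact5 (m : ℕ) : Nat.factorial (m + 5) =
    (m + 5) * ((m + 4) * ((m + 3) * ((m + 2) * ((m + 1) * Nat.factorial m)))) := rfl

/-- The Picard–Fuchs equation for `I0`. -/
theorem I0_PF : qd (qd (qd (qd I0))) =
    PowerSeries.X * (PowerSeries.C (3125 : ℚ) * qd (qd (qd (qd I0)))
      + PowerSeries.C (6250 : ℚ) * qd (qd (qd I0)) + PowerSeries.C (4375 : ℚ) * qd (qd I0)
      + PowerSeries.C (1250 : ℚ) * qd I0 + PowerSeries.C (120 : ℚ) * I0) := by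
  ext n
  cases n with
  | zero =>
    rw [PowerSeries.coeff_zero_X_mul]
    simp [qd]
  | succ n =>
    rw [PowerSeries.coeff_succ_X_mul]
    simp only [map_add, PowerSeries.coeff_C_mul, qd, PowerSeries.coeff_mk, I0]
    rw [show 5 * (n + 1) = 5 * n + 5 by ring, fact5 (5 * n), Nat.factorial_succ]
    have hf : ((Nat.factorial n : ℚ)) ≠ 0 := Nat.cast_ne_zero.mpr (Nat.factorial_ne_zero n)
    have hf5 : ((Nat.factorial (5 * n) : ℚ)) ≠ 0 := Nat.cast_ne_zero.mpr (Nat.factorial_ne_zero _)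
    have hn1 : ((n : ℚ) + 1) ≠ 0 := by positivity
    push_cast
    field_simp
    ring

/-- The second Yamaguchi–Yau identity:
`𝒳₄ = -4𝒳𝒳₃ - 3𝒳₂² - 6𝒳²𝒳₂ - 𝒳⁴ - (15/4)(𝒵₂𝒳² + 𝒵₂𝒳₂ + 𝒵₃𝒳)
      - (23/24)𝒵₄ + (29/9)𝒵₁²𝒵₂ - (65/72)𝒵₁𝒵₃ - (3/4)𝒵₂²`. -/
theorem statement5 (L : PowerSeries ℚ)
    (hc : PowerSeries.constantCoeff L = 1)
    (hL : L ^ 5 * (1 - 5 ^ 5 * PowerSeries.X) = 1) :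
    Xg L 4 =
      -4 * Xg L 1 * Xg L 3 - 3 * (Xg L 2) ^ 2 - 6 * (Xg L 1) ^ 2 * Xg L 2 - (Xg L 1) ^ 4
        - PowerSeries.C (15 / 4 : ℚ) *
            (Zg L 2 * (Xg L 1) ^ 2 + Zg L 2 * Xg L 2 + Zg L 3 * Xg L 1)
        - PowerSeries.C (23 / 24 : ℚ) * Zg L 4
        + PowerSeries.C (29 / 9 : ℚ) * (Zg L 1) ^ 2 * Zg L 2
        - PowerSeries.C (65 / 72 : ℚ) * Zg L 1 * Zg L 3
        - PowerSeries.C (3 / 4 : ℚ) * (Zg L 2) ^ 2 := by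
  have hu : L * L⁻¹ = 1 := PowerSeries.mul_inv_cancel L (by rw [hc]; exact one_ne_zero)
  have hv : I0 * I0⁻¹ = 1 := PowerSeries.mul_inv_cancel I0 (by rw [I0_const]; exact one_ne_zero)
  have hdL : 5 * qd L = L ^ 6 - L := by
    have h := congrArg qd hL
    simp only [qd_mul, qd_add, qd_sub, qd_neg, qd_one, qd_C, qd_X, qd_ofNat, qd_pow, Nat.cast_ofNat, zero_mul, mul_zero, zero_add, add_zero, one_mul, mul_one, sub_zero] at h
    linear_combination L * h + (-(5 * qd L) - L) * hL
  have hdu : qd L⁻¹ = -(L⁻¹ * L⁻¹ * qd L) := by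
    have h := congrArg qd hu
    simp only [qd_mul, qd_add, qd_sub, qd_neg, qd_one, qd_C, qd_X, qd_ofNat, qd_pow, Nat.cast_ofNat, zero_mul, mul_zero, zero_add, add_zero, one_mul, mul_one, sub_zero] at h
    linear_combination L⁻¹ * h - qd L⁻¹ * hu
  have hdv : qd I0⁻¹ = -(I0⁻¹ * I0⁻¹ * qd I0) := by
    have h := congrArg qd hv
    simp only [qd_mul, qd_add, qd_sub, qd_neg, qd_one, qd_C, qd_X, qd_ofNat, qd_pow, Nat.cast_ofNat, zero_mul, mul_zero, zero_add, add_zero, one_mul, mul_one, sub_zero] at h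
    linear_combination I0⁻¹ * h - qd I0⁻¹ * hv
  have hc5 : (5 : PowerSeries ℚ) * PowerSeries.C (1 / 5 : ℚ) = 1 := by
    have e1 : ((5 : PowerSeries ℚ)) = PowerSeries.C (5 : ℚ) := (map_ofNat _ _).symm
    have e2 : ((1 : PowerSeries ℚ)) = PowerSeries.C (1 : ℚ) := (map_one _).symm
    rw [e1, e2, ← map_mul]
    norm_num
  have hA1 : (4 : PowerSeries ℚ) * PowerSeries.C (15 / 4 : ℚ) = 15 := by
    have e1 : ((4 : PowerSeries ℚ)) = PowerSeries.C (4 : ℚ) := (map_ofNat _ _).symm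
    have e2 : ((15 : PowerSeries ℚ)) = PowerSeries.C (15 : ℚ) := (map_ofNat _ _).symm
    rw [e1, e2, ← map_mul]
    norm_num
  have hA2 : (24 : PowerSeries ℚ) * PowerSeries.C (23 / 24 : ℚ) = 23 := by
    have e1 : ((24 : PowerSeries ℚ)) = PowerSeries.C (24 : ℚ) := (map_ofNat _ _).symm
    have e2 : ((23 : PowerSeries ℚ)) = PowerSeries.C (23 : ℚ) := (map_ofNat _ _).symm
    rw [e1, e2, ← map_mul]
    norm_num
  have hA3 : (9 : PowerSeries ℚ) * PowerSeries.C (29 / 9 : ℚ) = 29 := by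
    have e1 : ((9 : PowerSeries ℚ)) = PowerSeries.C (9 : ℚ) := (map_ofNat _ _).symm
    have e2 : ((29 : PowerSeries ℚ)) = PowerSeries.C (29 : ℚ) := (map_ofNat _ _).symm
    rw [e1, e2, ← map_mul]
    norm_num
  have hA4 : (72 : PowerSeries ℚ) * PowerSeries.C (65 / 72 : ℚ) = 65 := by
    have e1 : ((72 : PowerSeries ℚ)) = PowerSeries.C (72 : ℚ) := (map_ofNat _ _).symm
    have e2 : ((65 : PowerSeries ℚ)) = PowerSeries.C (65 : ℚ) := (map_ofNat _ _).symm
    rw [e1, e2, ← map_mul]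
    norm_num
  have hA5 : (4 : PowerSeries ℚ) * PowerSeries.C (3 / 4 : ℚ) = 3 := by
    have e1 : ((4 : PowerSeries ℚ)) = PowerSeries.C (4 : ℚ) := (map_ofNat _ _).symm
    have e2 : ((3 : PowerSeries ℚ)) = PowerSeries.C (3 : ℚ) := (map_ofNat _ _).symm
    rw [e1, e2, ← map_mul]
    norm_num
  have hPF : 625 * qd (qd (qd (qd I0))) = (L ^ 5 - 1) *
      (1250 * (qd (qd (qd I0))) + 875 * (qd (qd I0)) + 250 * (qd I0) + 24 * I0) := by
    have hPF0 := I0_PF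
    have e1 : PowerSeries.C (3125 : ℚ) = (3125 : PowerSeries ℚ) := map_ofNat _ _
    have e2 : PowerSeries.C (6250 : ℚ) = (6250 : PowerSeries ℚ) := map_ofNat _ _
    have e3 : PowerSeries.C (4375 : ℚ) = (4375 : PowerSeries ℚ) := map_ofNat _ _
    have e4 : PowerSeries.C (1250 : ℚ) = (1250 : PowerSeries ℚ) := map_ofNat _ _
    have e5 : PowerSeries.C (120 : ℚ) = (120 : PowerSeries ℚ) := map_ofNat _ _
    rw [e1, e2, e3, e4, e5] at hPF0
    linear_combination (625 * L ^ 5) * hPF0 + (-(625 * qd (qd (qd (qd I0))))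
      - 1250 * (qd (qd (qd I0))) - 875 * (qd (qd I0)) - 250 * (qd I0) - 24 * I0) * hL
  have hX1 : 5 * Xg L 1 = -L^4 + 5*(qd I0)*L⁻¹*I0⁻¹ + L⁻¹ := by
    have e : Xg L 1 = L⁻¹ * (qd I0 * I0⁻¹ - qd L * L⁻¹) := rfl
    rw [e]
    linear_combination (-L⁻¹^2) * hdL + (-L^4 - L^5*L⁻¹ + L⁻¹) * hu
  have hZ1 : 5 * Zg L 1 = L^4 := by
    have e : Zg L 1 = L⁻¹ * (qd L * L⁻¹ + PowerSeries.C (1 / 5 : ℚ)) := rfl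
    rw [e]
    linear_combination (L⁻¹^2) * hdL + (L⁻¹) * hc5 + (L^4 + L^5*L⁻¹ - L⁻¹) * hu
  have hZ2 : 25 * Zg L 2 = (-4)*L^3 + 4*L^8 := by
    have e : Zg L 2 = du L (Zg L 1) := rfl
    have h := congrArg qd hZ1
    simp only [qd_mul, qd_add, qd_sub, qd_neg, qd_one, qd_C, qd_X, qd_ofNat, qd_pow, Nat.cast_ofNat, zero_mul, mul_zero, zero_add, add_zero, one_mul, mul_one, sub_zero] at h
    rw [e, du]
    linear_combination (5*L⁻¹) * h + (4*L^3*L⁻¹) * hdL + ((-4)*L^3 + 4*L^8) * hu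
  have hZ3 : 125 * Zg L 3 = 12*L^2 + (-44)*L^7 + 32*L^12 := by
    have e : Zg L 3 = du L (Zg L 2) := rfl
    have h := congrArg qd hZ2
    simp only [qd_mul, qd_add, qd_sub, qd_neg, qd_one, qd_C, qd_X, qd_ofNat, qd_pow, Nat.cast_ofNat, zero_mul, mul_zero, zero_add, add_zero, one_mul, mul_one, sub_zero] at h
    rw [e, du]
    linear_combination (5*L⁻¹) * h + ((-12)*L^2*L⁻¹ + 32*L^7*L⁻¹) * hdL + (12*L^2 + (-44)*L^7 + 32*L^12) * hu
  have hZ4 : 625 * Zg L 4 = (-24)*L + 332*L^6 + (-692)*L^11 + 384*L^16 := by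
    have e : Zg L 4 = du L (Zg L 3) := rfl
    have h := congrArg qd hZ3
    simp only [qd_mul, qd_add, qd_sub, qd_neg, qd_one, qd_C, qd_X, qd_ofNat, qd_pow, Nat.cast_ofNat, zero_mul, mul_zero, zero_add, add_zero, one_mul, mul_one, sub_zero] at h
    rw [e, du]
    linear_combination (5*L⁻¹) * h + (24*L*L⁻¹ + (-308)*L^6*L⁻¹ + 384*L^11*L⁻¹) * hdL + ((-24)*L + 332*L^6 + (-692)*L^11 + 384*L^16) * hu
  have hX2 : 25 * Xg L 2 = 3*L^3 + (-5)*L^3*(qd I0)*I0⁻¹ + (-4)*L^8 + 5*(qd I0)*L⁻¹^2*I0⁻¹ + (-25)*(qd I0)^2*L⁻¹^2*I0⁻¹^2 + 25*(qd (qd I0))*L⁻¹^2*I0⁻¹ + L⁻¹^2 := by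
    have e : Xg L 2 = du L (Xg L 1) := rfl
    have h := congrArg qd hX1
    simp only [qd_mul, qd_add, qd_sub, qd_neg, qd_one, qd_C, qd_X, qd_ofNat, qd_pow, Nat.cast_ofNat, zero_mul, mul_zero, zero_add, add_zero, one_mul, mul_one, sub_zero] at h
    rw [e, du]
    linear_combination (5*L⁻¹) * h + (25*(qd I0)*L⁻¹*I0⁻¹ + 5*L⁻¹) * hdu + (25*(qd I0)*L⁻¹^2) * hdv + ((-4)*L^3*L⁻¹ + (-5)*(qd I0)*L⁻¹^3*I0⁻¹ - L⁻¹^3) * hdL + (3*L^3 + (-5)*L^3*(qd I0)*I0⁻¹ + (-5)*L^4*(qd I0)*L⁻¹*I0⁻¹ - L^4*L⁻¹ + (-5)*L^5*(qd I0)*L⁻¹^2*I0⁻¹ - L^5*L⁻¹^2 + (-4)*L^8 + 5*(qd I0)*L⁻¹^2*I0⁻¹ + L⁻¹^2) * hu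
  have hX3 : 125 * Xg L 3 = (-11)*L^2 + 5*L^2*(qd I0)*I0⁻¹ + 75*L^2*(qd I0)^2*I0⁻¹^2 + (-75)*L^2*(qd (qd I0))*I0⁻¹ + 41*L^7 + (-15)*L^7*(qd I0)*I0⁻¹ + (-32)*L^12 + (-375)*(qd I0)*(qd (qd I0))*L⁻¹^3*I0⁻¹^2 + 10*(qd I0)*L⁻¹^3*I0⁻¹ + (-75)*(qd I0)^2*L⁻¹^3*I0⁻¹^2 + 250*(qd I0)^3*L⁻¹^3*I0⁻¹^3 + 75*(qd (qd I0))*L⁻¹^3*I0⁻¹ + 125*(qd (qd (qd I0)))*L⁻¹^3*I0⁻¹ + 2*L⁻¹^3 := by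
    have e : Xg L 3 = du L (Xg L 2) := rfl
    have h := congrArg qd hX2
    simp only [qd_mul, qd_add, qd_sub, qd_neg, qd_one, qd_C, qd_X, qd_ofNat, qd_pow, Nat.cast_ofNat, zero_mul, mul_zero, zero_add, add_zero, one_mul, mul_one, sub_zero] at h
    rw [e, du]
    linear_combination (5*L⁻¹) * h + (50*(qd I0)*L⁻¹^2*I0⁻¹ + (-250)*(qd I0)^2*L⁻¹^2*I0⁻¹^2 + 250*(qd (qd I0))*L⁻¹^2*I0⁻¹ + 10*L⁻¹^2) * hdu + ((-25)*L^3*(qd I0)*L⁻¹ + 25*(qd I0)*L⁻¹^3 + (-250)*(qd I0)^2*L⁻¹^3*I0⁻¹ + 125*(qd (qd I0))*L⁻¹^3) * hdv + ((-15)*L^2*(qd I0)*L⁻¹*I0⁻¹ + 9*L^2*L⁻¹ + (-32)*L^7*L⁻¹ + (-10)*(qd I0)*L⁻¹^4*I0⁻¹ + 50*(qd I0)^2*L⁻¹^4*I0⁻¹^2 + (-50)*(qd (qd I0))*L⁻¹^4*I0⁻¹ + (-2)*L⁻¹^4) * hdL + ((-11)*L^2 + 5*L^2*(qd I0)*I0⁻¹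 + 75*L^2*(qd I0)^2*I0⁻¹^2 + (-75)*L^2*(qd (qd I0))*I0⁻¹ + (-10)*L^3*(qd I0)*L⁻¹*I0⁻¹ + 50*L^3*(qd I0)^2*L⁻¹*I0⁻¹^2 + (-50)*L^3*(qd (qd I0))*L⁻¹*I0⁻¹ + (-2)*L^3*L⁻¹ + (-10)*L^4*(qd I0)*L⁻¹^2*I0⁻¹ + 50*L^4*(qd I0)^2*L⁻¹^2*I0⁻¹^2 + (-50)*L^4*(qd (qd I0))*L⁻¹^2*I0⁻¹ + (-2)*L^4*L⁻¹^2 + (-10)*L^5*(qd I0)*L⁻¹^3*I0⁻¹ + 50*L^5*(qd I0)^2*L⁻¹^3*I0⁻¹^2 + (-50)*L^5*(qd (qd I0))*L⁻¹^3*I0⁻¹ + (-2)*L^5*L⁻¹^3 + 41*L^7 + (-15)*L^7*(qd I0)*I0⁻¹ + (-32)*L^12 + 10*(qd I0)*L⁻¹^3*I0⁻¹ + (-50)*(qd I0)^2*L⁻¹^3*I0⁻¹^2 + 50*(qd (qd I0))*L⁻¹^3*I0⁻¹ + 2*L⁻¹^3) * hu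
  have hX4 : 625 * Xg L 4 = 16*L + 2250*L*(qd I0)*(qd (qd I0))*I0⁻¹^2 + (-40)*L*(qd I0)*I0⁻¹ + 50*L*(qd I0)^2*I0⁻¹^2 + (-1500)*L*(qd I0)^3*I0⁻¹^3 + (-50)*L*(qd (qd I0))*I0⁻¹ + (-750)*L*(qd (qd (qd I0)))*I0⁻¹ + (-309)*L^6 + 115*L^6*(qd I0)*I0⁻¹ + 225*L^6*(qd I0)^2*I0⁻¹^2 + (-225)*L^6*(qd (qd I0))*I0⁻¹ + 671*L^11 + (-105)*L^11*(qd I0)*I0⁻¹ + (-384)*L^16 + (-2250)*(qd I0)*(qd (qd I0))*L⁻¹^4*I0⁻¹^2 + (-2500)*(qd I0)*(qd (qd (qd I0)))*L⁻¹^4*I0⁻¹^2 + 30*(qd I0)*L⁻¹^4*I0⁻¹ + 7500*(qd I0)^2*(qd (qd I0))*L⁻¹^4*I0⁻¹^3 + (-275)*(qd I0)^2*L⁻¹^4*I0⁻¹^2 + 1500*(qd I0)^3*L⁻¹^4*I0⁻¹^3 + (-3750)*(qd I0)^4*L⁻¹^4*I0⁻¹^4 + 275*(qd (qd I0))*L⁻¹^4*I0⁻¹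 + (-1875)*(qd (qd I0))^2*L⁻¹^4*I0⁻¹^2 + 750*(qd (qd (qd I0)))*L⁻¹^4*I0⁻¹ + 625*(qd (qd (qd (qd I0))))*L⁻¹^4*I0⁻¹ + 6*L⁻¹^4 := by
    have e : Xg L 4 = du L (Xg L 3) := rfl
    have h := congrArg qd hX3
    simp only [qd_mul, qd_add, qd_sub, qd_neg, qd_one, qd_C, qd_X, qd_ofNat, qd_pow, Nat.cast_ofNat, zero_mul, mul_zero, zero_add, add_zero, one_mul, mul_one, sub_zero] at h
    rw [e, du]
    linear_combination (5*L⁻¹) * h + ((-5625)*(qd I0)*(qd (qd I0))*L⁻¹^3*I0⁻¹^2 + 150*(qd I0)*L⁻¹^3*I0⁻¹ + (-1125)*(qd I0)^2*L⁻¹^3*I0⁻¹^2 + 3750*(qd I0)^3*L⁻¹^3*I0⁻¹^3 + 1125*(qd (qd I0))*L⁻¹^3*I0⁻¹ + 1875*(qd (qd (qd I0)))*L⁻¹^3*I0⁻¹ + 30*L⁻¹^3) * hdu + (25*L^2*(qd I0)*L⁻¹ + 750*L^2*(qd I0)^2*L⁻¹*I0⁻¹ + (-375)*L^2*(qd (qd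 I0))*L⁻¹ + (-75)*L^7*(qd I0)*L⁻¹ + (-3750)*(qd I0)*(qd (qd I0))*L⁻¹^4*I0⁻¹ + 50*(qd I0)*L⁻¹^4 + (-750)*(qd I0)^2*L⁻¹^4*I0⁻¹ + 3750*(qd I0)^3*L⁻¹^4*I0⁻¹^2 + 375*(qd (qd I0))*L⁻¹^4 + 625*(qd (qd (qd I0)))*L⁻¹^4) * hdv + (10*L*(qd I0)*L⁻¹*I0⁻¹ + 150*L*(qd I0)^2*L⁻¹*I0⁻¹^2 + (-150)*L*(qd (qd I0))*L⁻¹*I0⁻¹ + (-22)*L*L⁻¹ + (-105)*L^6*(qd I0)*L⁻¹*I0⁻¹ + 287*L^6*L⁻¹ + (-384)*L^11*L⁻¹ + 1125*(qd I0)*(qd (qd I0))*L⁻¹^5*I0⁻¹^2 + (-30)*(qd I0)*L⁻¹^5*I0⁻¹ + 225*(qd I0)^2*L⁻¹^5*I0⁻¹^2 + (-750)*(qd I0)^3*L⁻¹^5*I0⁻¹^3 + (-225)*(qd (qd I0))*L⁻¹^5*I0⁻¹ + (-375)*(qd (qd (qd I0)))*L⁻¹^5*I0⁻¹ + (-6)*L⁻¹^5)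 * hdL + (16*L + 2250*L*(qd I0)*(qd (qd I0))*I0⁻¹^2 + (-40)*L*(qd I0)*I0⁻¹ + 50*L*(qd I0)^2*I0⁻¹^2 + (-1500)*L*(qd I0)^3*I0⁻¹^3 + (-50)*L*(qd (qd I0))*I0⁻¹ + (-750)*L*(qd (qd (qd I0)))*I0⁻¹ + 1125*L^2*(qd I0)*(qd (qd I0))*L⁻¹*I0⁻¹^2 + (-30)*L^2*(qd I0)*L⁻¹*I0⁻¹ + 225*L^2*(qd I0)^2*L⁻¹*I0⁻¹^2 + (-750)*L^2*(qd I0)^3*L⁻¹*I0⁻¹^3 + (-225)*L^2*(qd (qd I0))*L⁻¹*I0⁻¹ + (-375)*L^2*(qd (qd (qd I0)))*L⁻¹*I0⁻¹ + (-6)*L^2*L⁻¹ + 1125*L^3*(qd I0)*(qd (qd I0))*L⁻¹^2*I0⁻¹^2 + (-30)*L^3*(qd I0)*L⁻¹^2*I0⁻¹ + 225*L^3*(qd I0)^2*L⁻¹^2*I0⁻¹^2 + (-750)*L^3*(qd I0)^3*L⁻¹^2*I0⁻¹^3 + (-225)*L^3*(qd (qd I0))*L⁻¹^2*I0⁻¹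 + (-375)*L^3*(qd (qd (qd I0)))*L⁻¹^2*I0⁻¹ + (-6)*L^3*L⁻¹^2 + 1125*L^4*(qd I0)*(qd (qd I0))*L⁻¹^3*I0⁻¹^2 + (-30)*L^4*(qd I0)*L⁻¹^3*I0⁻¹ + 225*L^4*(qd I0)^2*L⁻¹^3*I0⁻¹^2 + (-750)*L^4*(qd I0)^3*L⁻¹^3*I0⁻¹^3 + (-225)*L^4*(qd (qd I0))*L⁻¹^3*I0⁻¹ + (-375)*L^4*(qd (qd (qd I0)))*L⁻¹^3*I0⁻¹ + (-6)*L^4*L⁻¹^3 + 1125*L^5*(qd I0)*(qd (qd I0))*L⁻¹^4*I0⁻¹^2 + (-30)*L^5*(qd I0)*L⁻¹^4*I0⁻¹ + 225*L^5*(qd I0)^2*L⁻¹^4*I0⁻¹^2 + (-750)*L^5*(qd I0)^3*L⁻¹^4*I0⁻¹^3 + (-225)*L^5*(qd (qd I0))*L⁻¹^4*I0⁻¹ + (-375)*L^5*(qd (qd (qd I0)))*L⁻¹^4*I0⁻¹ + (-6)*L^5*L⁻¹^4 + (-309)*L^6 + 115*L^6*(qd I0)*I0⁻¹ + 225*L^6*(qd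 I0)^2*I0⁻¹^2 + (-225)*L^6*(qd (qd I0))*I0⁻¹ + 671*L^11 + (-105)*L^11*(qd I0)*I0⁻¹ + (-384)*L^16 + (-1125)*(qd I0)*(qd (qd I0))*L⁻¹^4*I0⁻¹^2 + 30*(qd I0)*L⁻¹^4*I0⁻¹ + (-225)*(qd I0)^2*L⁻¹^4*I0⁻¹^2 + 750*(qd I0)^3*L⁻¹^4*I0⁻¹^3 + 225*(qd (qd I0))*L⁻¹^4*I0⁻¹ + 375*(qd (qd (qd I0)))*L⁻¹^4*I0⁻¹ + 6*L⁻¹^4) * hu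
  have h45 : (45000 : PowerSeries ℚ) ≠ 0 := by
    intro h0
    have h1 := congrArg (PowerSeries.constantCoeff) h0
    rw [map_ofNat, map_zero] at h1
    norm_num at h1
  apply mul_left_cancel₀ h45
  linear_combination (11250*(Xg L 1)*(Zg L 3) + 11250*(Xg L 1)^2*(Zg L 2) + 11250*(Xg L 2)*(Zg L 2)) * hA1 + (1875*(Zg L 4)) * hA2 + ((-5000)*(Zg L 1)^2*(Zg L 2)) * hA3 + (625*(Zg L 1)*(Zg L 3)) * hA4 + (11250*(Zg L 2)^2) * hA5 + (72) * hX4 + (1440*(Xg L 1)) * hX3 + (648*L^3 + (-1080)*L^3*(qd I0)*I0⁻¹ + (-864)*L^8 + 1080*(qd I0)*L⁻¹^2*I0⁻¹ + (-5400)*(qd I0)^2*L⁻¹^2*I0⁻¹^2 + 5400*(qd (qd I0))*L⁻¹^2*I0⁻¹ + 10800*(Xg L 1)^2 + 5400*(Xg L 2) + 6750*(Zg L 2) + 216*L⁻¹^2) * hX2 + ((-3168)*L^2 + 1440*L^2*(qd I0)*I0⁻¹ + 21600*L^2*(qd I0)^2*I0⁻¹^2 + (-21600)*L^2*(qd (qd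 I0))*I0⁻¹ + (-10800)*L^3*(qd I0)*(Xg L 1)*I0⁻¹ + 4320*L^3*(qd I0)*L⁻¹*I0⁻¹ + (-10800)*L^3*(qd I0)^2*L⁻¹*I0⁻¹^2 + 6480*L^3*(Xg L 1) + 1296*L^3*L⁻¹ + (-3600)*L^4*(qd I0)*(Xg L 1)*L⁻¹*I0⁻¹ + (-4320)*L^4*(qd I0)*L⁻¹^2*I0⁻¹ + 5400*L^4*(qd I0)^2*L⁻¹^2*I0⁻¹^2 + (-10800)*L^4*(qd (qd I0))*L⁻¹^2*I0⁻¹ + (-720)*L^4*(Xg L 1)*L⁻¹ + (-1800)*L^4*(Xg L 1)^2 + (-6750)*L^4*(Zg L 2) + (-648)*L^4*L⁻¹^2 + 10512*L^7 + (-2160)*L^7*(qd I0)*I0⁻¹ + (-7560)*L^8*(qd I0)*L⁻¹*I0⁻¹ + (-8280)*L^8*(Xg L 1) + (-1512)*L^8*L⁻¹ + (-7560)*L^12 + (-54000)*(qd I0)*(qd (qd I0))*L⁻¹^3*I0⁻¹^2 + 14400*(qd I0)*(Xg L 1)*L⁻¹^2*I0⁻¹ + 9000*(qd I0)*(Xg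 L 1)^2*L⁻¹*I0⁻¹ + 33750*(qd I0)*(Zg L 2)*L⁻¹*I0⁻¹ + 8280*(qd I0)*L⁻¹^3*I0⁻¹ + (-45000)*(qd I0)^2*(Xg L 1)*L⁻¹^2*I0⁻¹^2 + (-16200)*(qd I0)^2*L⁻¹^3*I0⁻¹^2 + 27000*(qd I0)^3*L⁻¹^3*I0⁻¹^3 + 54000*(qd (qd I0))*(Xg L 1)*L⁻¹^2*I0⁻¹ + 32400*(qd (qd I0))*L⁻¹^3*I0⁻¹ + 36000*(qd (qd (qd I0)))*L⁻¹^3*I0⁻¹ + 33750*(Xg L 1)*(Zg L 2) + 2520*(Xg L 1)*L⁻¹^2 + 1800*(Xg L 1)^2*L⁻¹ + 9000*(Xg L 1)^3 + 6750*(Zg L 2)*L⁻¹ + 33750*(Zg L 3) + 1080*L⁻¹^3) * hX1 + (69) * hZ4 + ((-270)*L^4 + 1350*(qd I0)*L⁻¹*I0⁻¹ + 325*(Zg L 1) + 270*L⁻¹) * hZ3 + (594*L^3 + (-1350)*L^3*(qd I0)*I0⁻¹ + (-2700)*L^4*(qd I0)*L⁻¹*I0⁻¹ + (-540)*L^4*L⁻¹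 + (-594)*L^8 + 4050*(qd I0)*L⁻¹^2*I0⁻¹ + 6750*(qd (qd I0))*L⁻¹^2*I0⁻¹ + (-5800)*(Zg L 1)^2 + 1350*(Zg L 2) + 540*L⁻¹^2) * hZ2 + (780*L^2 + 4640*L^3*(Zg L 1) + (-1932)*L^7 + (-4640)*L^8*(Zg L 1) + 1152*L^12) * hZ1 + (72*L⁻¹^4*I0⁻¹) * hPF + (1728*I0*L*I0⁻¹ + 1728*I0*L^2*L⁻¹*I0⁻¹ + 1728*I0*L^3*L⁻¹^2*I0⁻¹ + 1728*I0*L^4*L⁻¹^3*I0⁻¹ + (-1224)*L + (-162000)*L*(qd I0)*(qd (qd I0))*I0⁻¹^2 + 2880*L*(qd I0)*I0⁻¹ + (-3600)*L*(qd I0)^2*I0⁻¹^2 + 108000*L*(qd I0)^3*I0⁻¹^3 + 3600*L*(qd (qd I0))*I0⁻¹ + 54000*L*(qd (qd (qd I0)))*I0⁻¹ + (-54000)*L^2*(qd I0)*(qd (qd I0))*L⁻¹*I0⁻¹^2 + 1080*L^2*(qd I0)*L⁻¹*I0⁻¹ + (-32400)*L^2*(qd I0)^2*L⁻¹*I0⁻¹^2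 + 25200*L^2*(qd (qd I0))*L⁻¹*I0⁻¹ + 54000*L^2*(qd (qd (qd I0)))*L⁻¹*I0⁻¹ + (-1296)*L^2*L⁻¹ + 2160*L^3*(qd I0)*L⁻¹^2*I0⁻¹ + 19800*L^3*(qd (qd I0))*L⁻¹^2*I0⁻¹ + 54000*L^3*(qd (qd (qd I0)))*L⁻¹^2*I0⁻¹ + (-1728)*L^3*L⁻¹^2 + 18000*L^4*(qd I0)*L⁻¹^3*I0⁻¹ + 63000*L^4*(qd (qd I0))*L⁻¹^3*I0⁻¹ + 90000*L^4*(qd (qd (qd I0)))*L⁻¹^3*I0⁻¹ + (-936)*L^6 + (-5760)*L^6*(qd I0)*I0⁻¹ + (-5400)*L^6*(qd (qd I0))*I0⁻¹ + (-3240)*L^7*(qd I0)*L⁻¹*I0⁻¹ + (-5400)*L^7*(qd (qd I0))*L⁻¹*I0⁻¹ + (-432)*L^7*L⁻¹ + 432*L^11 + 2160*L^11*(qd I0)*I0⁻¹) * hu + (1728*L + (-1728)*L⁻¹^4) * hv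

end
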